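/- In a bipolar orientation (st-orientation) of a 2-connected plane graph, every vertex other than the source s and the sink t has both an incoming and an outgoing edge, and around every such vertex the incoming edges appear consecutively in the cyclic order, as do the outgoing edges. -/

import Mathlib

open SimpleGraph

/-- Reversal of darts, as a permutation. -/
def dartRev {V : Type*} (G : SimpleGraph V) : Equiv.Perm G.Dart :=
  ⟨SimpleGraph.Dart.symm, SimpleGraph.Dart.symm,
    fun d => d.symm_symm, fun d => d.symm_symm⟩

/-- The number of cycles of a permutation, counting fixed points as cycles. -/
noncomputable def numCycles {α : Type*} [Fintype α] [DecidableEq α]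
    (σ : Equiv.Perm α) : ℕ :=
  σ.cycleType.card + {x : α | σ x = x}.ncard

/-- A rotation system (combinatorial embedding) on a graph: a permutation of the darts
whose orbits are exactly the sets of darts leaving a common vertex, giving the cyclic
order of the edges around each vertex. -/
structure RotationSystem {V : Type*} [Fintype V] [DecidableEq V]
    (G : SimpleGraph V) [DecidableRel G.Adj] where
  σ : Equiv.Perm G.Dart
  fst_fixed : ∀ d : G.Dart, (σ d).toProd.1 = d.toProd.1
  orbit_eq : ∀ d d' : G.Dart, d.toProd.1 = d'.toProd.1 → σ.SameCycle d d'

/-- The face permutation of a rotation system: its orbits are the faces. -/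
def RotationSystem.facePerm {V : Type*} [Fintype V] [DecidableEq V]
    {G : SimpleGraph V} [DecidableRel G.Adj] (R : RotationSystem G) :
    Equiv.Perm G.Dart :=
  R.σ * dartRev G

/-- A rotation system is planar (describes a plane graph) when it satisfies Euler's
formula: `#vertices − #edges + #faces = 2`. -/
noncomputable def RotationSystem.IsPlanar {V : Type*} [Fintype V] [DecidableEq V]
    {G : SimpleGraph V} [DecidableRel G.Adj] (R : RotationSystem G) : Prop :=
  (Fintype.card V : ℤ) - (G.edgeFinset.card : ℤ) + (numCycles R.facePerm : ℤ) = 2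

section aux
open Equiv Equiv.Perm

set_option linter.unusedSectionVars false

variable {α : Type*} [Fintype α] [DecidableEq α]

/-- In a periodic orbit containing a `p`-point and a `¬p`-point, there is a
transition from `p` to `¬p`. -/
theorem exists_transition_down (φ : Equiv.Perm α) (p : α → Prop) (e : α)
    (h1 : ∃ i : ℕ, p ((φ ^ i) e)) (h2 : ∃ j : ℕ, ¬ p ((φ ^ j) e)) :
    ∃ k : ℕ, p ((φ ^ k) e) ∧ ¬ p ((φ ^ (k+1)) e) := by
  classical
  obtain ⟨i, hi⟩ := h1
  obtain ⟨j, hj⟩ := h2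
  have hNpos : 0 < orderOf φ := orderOf_pos φ
  have hJ : ¬ p ((φ ^ (j + (i+1) * orderOf φ)) e) := by
    rwa [pow_add, mul_comm (i+1), pow_mul, pow_orderOf_eq_one, one_pow, mul_one]
  have hJi : i < j + (i+1) * orderOf φ := by nlinarith
  have hex : ∃ l : ℕ, ¬ p ((φ ^ (i + l)) e) :=
    ⟨j + (i+1) * orderOf φ - i, by rwa [Nat.add_sub_cancel' hJi.le]⟩
  have hL : ¬ p ((φ ^ (i + Nat.find hex)) e) := Nat.find_spec hex
  have hLpos : 0 < Nat.find hex := by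
    rcases Nat.eq_zero_or_pos (Nat.find hex) with h | h
    · exact absurd hi (by simpa [h] using hL)
    · exact h
  refine ⟨i + (Nat.find hex - 1), ?_, ?_⟩
  · have := Nat.find_min hex (m := Nat.find hex - 1) (by omega)
    simpa using this
  · have heq : i + (Nat.find hex - 1) + 1 = i + Nat.find hex := by omega
    rw [heq]; exact hL

theorem exists_transition_up (φ : Equiv.Perm α) (p : α → Prop) (e : α)
    (h1 : ∃ i : ℕ, ¬ p ((φ ^ i) e)) (h2 : ∃ j : ℕ, p ((φ ^ j) e)) :
    ∃ k : ℕ, ¬ p ((φ ^ k) e) ∧ p ((φ ^ (k+1)) e) := by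
  obtain ⟨k, hk1, hk2⟩ := exists_transition_down φ (fun x => ¬ p x) e
    h1 (by obtain ⟨j, hj⟩ := h2; exact ⟨j, not_not_intro hj⟩)
  exact ⟨k, hk1, not_not.mp hk2⟩

/-- The number of cycles of a permutation is at most the number of points where
`p` transitions to `¬p`, provided every orbit has such a transition. -/
theorem card_cycleFactors_le (φ : Equiv.Perm α) (p : α → Prop) [DecidablePred p]
    (h : ∀ e : α, ∃ k : ℕ, p ((φ ^ k) e) ∧ ¬ p ((φ ^ (k+1)) e)) :
    φ.cycleFactorsFinset.card ≤ (Finset.univ.filter fun e => p e ∧ ¬ p (φ e)).card := by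
  classical
  rcases Finset.eq_empty_or_nonempty φ.cycleFactorsFinset with hemp | ⟨c0, hc0⟩
  · simp [hemp]
  have hne : Nonempty α :=
    ⟨((mem_cycleFactorsFinset_iff.mp hc0).1.nonempty_support).choose⟩
  have key : ∀ c ∈ φ.cycleFactorsFinset, ∃ x : α,
      (x ∈ (Finset.univ.filter fun e => p e ∧ ¬ p (φ e))) ∧ c = φ.cycleOf x := by
    intro c hc
    obtain ⟨e, he⟩ := (mem_cycleFactorsFinset_iff.mp hc).1.nonempty_support
    obtain ⟨k, hk1, hk2⟩ := h e
    have heφ : e ∈ φ.support := mem_cycleFactorsFinset_support_le hc he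
    have hce : c = φ.cycleOf e := cycle_is_cycleOf he hc
    have hx : (φ ^ k) e ∈ c.support := by
      rw [hce]
      exact mem_support_cycleOf_iff.mpr ⟨⟨(k : ℤ), by simp [zpow_natCast]⟩, heφ⟩
    refine ⟨(φ ^ k) e, ?_, cycle_is_cycleOf hx hc⟩
    simp only [Finset.mem_filter, Finset.mem_univ, true_and]
    refine ⟨hk1, ?_⟩
    rwa [pow_succ'] at hk2
  choose g hg1 hg2 using key
  exact Finset.card_le_card_of_injOn
    (fun c => if hc : c ∈ φ.cycleFactorsFinset then g c hc else Classical.arbitrary _)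
    (by intro c hc; simp only [Finset.mem_coe] at hc ⊢; rw [dif_pos hc]; exact hg1 c hc)
    (by
      intro c hc c' hc' hcc'
      simp only [Finset.mem_coe] at hc hc'
      simp only [hc, hc', dif_pos] at hcc'
      rw [hg2 c hc, hg2 c' hc', hcc'])

end aux

theorem stmt_13 {V : Type*} [Fintype V] [DecidableEq V]
    (G : SimpleGraph V) [DecidableRel G.Adj]
    (R : RotationSystem G) (hplanar : R.IsPlanar)
    (hcard : 3 ≤ Fintype.card V)
    (h2conn : ∀ v : V, (G.induce {u : V | u ≠ v}).Connected)
    (ori : G.Dart → Prop)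
    (hori : ∀ d : G.Dart, ori d ↔ ¬ ori d.symm)
    (hacyclic : ∀ v : V, ¬ Relation.TransGen
      (fun a b : V => ∃ d : G.Dart, ori d ∧ d.toProd.1 = a ∧ d.toProd.2 = b) v v)
    (s t : V)
    (hsource : ∀ v : V, (¬ ∃ d : G.Dart, ori d ∧ d.toProd.2 = v) ↔ v = s)
    (hsink : ∀ v : V, (¬ ∃ d : G.Dart, ori d ∧ d.toProd.1 = v) ↔ v = t) :
    (∀ v : V, v ≠ s → v ≠ t →
      (∃ d : G.Dart, ori d ∧ d.toProd.2 = v) ∧ (∃ d : G.Dart, ori d ∧ d.toProd.1 = v)) ∧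
    (∀ v : V,
      {d : G.Dart | d.toProd.1 = v ∧ ¬ ori d ∧ ori (R.σ d)}.ncard ≤ 1) := by
  classical
  have part1 : ∀ v : V, v ≠ s → v ≠ t →
      (∃ d : G.Dart, ori d ∧ d.toProd.2 = v) ∧ (∃ d : G.Dart, ori d ∧ d.toProd.1 = v) := by
    intro v hvs hvt
    constructor
    · by_contra h; exact hvs ((hsource v).mp h)
    · by_contra h; exact hvt ((hsink v).mp h)
  refine ⟨part1, ?_⟩
  have euler := hplanar
  unfold RotationSystem.IsPlanar at euler
  set φ := R.facePerm with hφdef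
  set n := Fintype.card V with hn
  set m := G.edgeFinset.card with hm
  -- basic dart facts
  have hori2 : ∀ d : G.Dart, ori d.symm ↔ ¬ ori d := by
    intro d
    rw [hori d.symm, Dart.symm_symm]
  have hφ_eval : ∀ d : G.Dart, φ d = R.σ d.symm := fun d => rfl
  have hφ_fst : ∀ d : G.Dart, (φ d).toProd.1 = d.toProd.2 := by
    intro d
    rw [hφ_eval, R.fst_fixed]
    simp
  have hφ_symm : ∀ d : G.Dart, φ d.symm = R.σ d := by
    intro d; rw [hφ_eval, Dart.symm_symm]
  have hσ_pow_fst : ∀ (k : ℕ) (d : G.Dart), ((R.σ ^ k) d).toProd.1 = d.toProd.1 := by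
    intro k
    induction k with
    | zero => intro d; rfl
    | succ k ih =>
      intro d
      rw [pow_succ', Equiv.Perm.mul_apply]
      exact (R.fst_fixed _).trans (ih d)
  have horder : 0 < orderOf φ := orderOf_pos φ
  have hφpow : ∀ e : G.Dart, (φ ^ orderOf φ) e = e := by
    intro e; rw [pow_orderOf_eq_one]; rfl
  -- every face contains a backward dart
  have hmix1 : ∀ e : G.Dart, ∃ i : ℕ, ¬ ori ((φ ^ i) e) := by
    intro e
    by_contra hcon
    push_neg at hcon
    have walk : ∀ k : ℕ, 1 ≤ k → Relation.TransGen
        (fun a b : V => ∃ d : G.Dart, ori d ∧ d.toProd.1 = a ∧ d.toProd.2 = b)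
        e.toProd.1 (((φ ^ k) e).toProd.1) := by
      intro k hk
      induction k with
      | zero => omega
      | succ k ih =>
        rcases Nat.lt_or_ge 0 k with h1 | h1
        · refine Relation.TransGen.tail (ih h1) ⟨(φ ^ k) e, hcon k, rfl, ?_⟩
          rw [pow_succ', Equiv.Perm.mul_apply, hφ_fst]
        · have hk0 : k = 0 := by omega
          subst hk0
          refine Relation.TransGen.single ⟨e, by simpa using hcon 0, rfl, ?_⟩
          rw [pow_one, hφ_fst]
    have := walk (orderOf φ) horder
    rw [hφpow] at this
    exact hacyclic _ this
  -- every face contains a forward dart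
  have hmix2 : ∀ e : G.Dart, ∃ i : ℕ, ori ((φ ^ i) e) := by
    intro e
    by_contra hcon
    push_neg at hcon
    have hsy : ∀ i : ℕ, ori ((φ ^ i) e).symm := fun i => (hori2 _).mpr (hcon i)
    have walk : ∀ k : ℕ, 1 ≤ k → Relation.TransGen
        (fun a b : V => ∃ d : G.Dart, ori d ∧ d.toProd.1 = a ∧ d.toProd.2 = b)
        (((φ ^ k) e).toProd.1) e.toProd.1 := by
      intro k hk
      induction k with
      | zero => omega
      | succ k ih =>
        rcases Nat.lt_or_ge 0 k with h1 | h1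
        · refine Relation.TransGen.head ⟨((φ ^ k) e).symm, hsy k, ?_, by simp⟩ (ih h1)
          rw [pow_succ', Equiv.Perm.mul_apply, hφ_fst]
          simp
        · have hk0 : k = 0 := by omega
          subst hk0
          refine Relation.TransGen.single ⟨e.symm, by simpa using hsy 0, ?_, by simp⟩
          rw [pow_one, hφ_fst]
          simp
    have := walk (orderOf φ) horder
    rw [hφpow] at this
    exact hacyclic _ this
  -- counting sets
  set A : Finset G.Dart := Finset.univ.filter (fun e => ori e ∧ ori (φ e)) with hA
  set B : Finset G.Dart := Finset.univ.filter (fun e => ori e ∧ ¬ ori (φ e)) with hB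
  have hAB : A.card + B.card = (Finset.univ.filter (fun e : G.Dart => ori e)).card := by
    rw [hA, hB, ← Finset.filter_filter, ← Finset.filter_filter]
    exact Finset.card_filter_add_card_filter_not (fun e => ori (φ e))
  -- forward darts are in bijection with edges
  have hFm : (Finset.univ.filter (fun e : G.Dart => ori e)).card = m := by
    rw [hm]
    apply Finset.card_bij (fun (d : G.Dart) _ => d.edge)
    · intro d hd
      simp [Dart.edge_mem]
    · intro d1 h1 d2 h2 he
      simp only [Finset.mem_filter, Finset.mem_univ, true_and] at h1 h2
      rcases (dart_edge_eq_iff d1 d2).mp he with h | h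
      · exact h
      · exact absurd (h ▸ h1) ((hori d2).mp h2)
    · intro b hb
      have hb' : b ∈ G.edgeSet := mem_edgeFinset.mp hb
      clear hb
      induction b using Sym2.ind with
      | _ u v =>
        rw [mem_edgeSet] at hb'
        by_cases hd : ori (Dart.mk (u, v) hb')
        · exact ⟨Dart.mk (u, v) hb', by simp [hd], rfl⟩
        · refine ⟨(Dart.mk (u, v) hb').symm, ?_, ?_⟩
          · simp only [Finset.mem_filter, Finset.mem_univ, true_and]
            exact (hori2 _).mpr hd
          · rw [Dart.edge_symm]
            rfl
  -- the number of faces is at most the number of forward-to-backward corners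
  have hfB : φ.cycleFactorsFinset.card ≤ B.card := by
    rw [hB]
    exact card_cycleFactors_le φ ori
      (fun e => exists_transition_down φ ori e (hmix2 e) (hmix1 e))
  -- numCycles φ is the number of cycle factors
  have hnofix : ∀ d : G.Dart, φ d ≠ d := by
    intro d hd
    have h1 := hφ_fst d
    rw [hd] at h1
    exact d.fst_ne_snd h1
  have hnum : numCycles φ = φ.cycleFactorsFinset.card := by
    unfold numCycles
    have h1 : {x : G.Dart | φ x = x} = ∅ := by
      ext d; simp [hnofix d]
    rw [h1, Set.ncard_empty, add_zero, Equiv.Perm.cycleType_def, Multiset.card_map]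
    rfl
  -- upper bound
  have hupper : (A.card : ℤ) ≤ (n : ℤ) - 2 := by
    rw [hnum] at euler
    omega
  -- incoming-to-outgoing switches around vertices
  set A' : Finset G.Dart := Finset.univ.filter (fun d => ¬ ori d ∧ ori (R.σ d)) with hA'
  have hA'A : A'.card = A.card := by
    apply Finset.card_bij (fun (d : G.Dart) _ => d.symm)
    · intro d hd
      simp only [hA', hA, Finset.mem_filter, Finset.mem_univ, true_and] at hd ⊢
      obtain ⟨h1, h2⟩ := hd
      exact ⟨(hori2 d).mpr h1, by rw [hφ_symm]; exact h2⟩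
    · intro a _ b _ hab
      have := congrArg Dart.symm hab
      simpa using this
    · intro b hb
      refine ⟨b.symm, ?_, by simp⟩
      simp only [hA', hA, Finset.mem_filter, Finset.mem_univ, true_and] at hb ⊢
      obtain ⟨h1, h2⟩ := hb
      refine ⟨(hori b).mp h1, ?_⟩
      rw [← hφ_eval]
      exact h2
  set c : V → ℕ := fun v =>
    (Finset.univ.filter (fun d : G.Dart => d.toProd.1 = v ∧ ¬ ori d ∧ ori (R.σ d))).card
    with hcdef
  have hfiber : A'.card = ∑ v : V, c v := by
    rw [hA', Finset.card_eq_sum_card_fiberwise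
      (f := fun d : G.Dart => d.toProd.1) (t := Finset.univ) (fun d _ => Finset.mem_univ _)]
    apply Finset.sum_congr rfl
    intro v _
    rw [hcdef]
    congr 1
    rw [Finset.filter_filter]
    apply Finset.filter_congr
    intro d _
    tauto
  -- all darts at s are forward, all darts at t are backward
  have hFs : ∀ d : G.Dart, d.toProd.1 = s → ori d := by
    intro d hd
    by_contra h
    exact ((hsource s).mpr rfl) ⟨d.symm, (hori2 d).mpr h, by simp [hd]⟩
  have hFt : ∀ d : G.Dart, d.toProd.1 = t → ¬ ori d := by
    intro d hd h
    exact ((hsink t).mpr rfl) ⟨d, h, hd⟩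
  have hcs : c s = 0 := by
    rw [hcdef, Finset.card_eq_zero]
    rw [Finset.filter_eq_empty_iff]
    rintro d _ ⟨h1, h2, _⟩
    exact h2 (hFs d h1)
  have hct : c t = 0 := by
    rw [hcdef, Finset.card_eq_zero]
    rw [Finset.filter_eq_empty_iff]
    rintro d _ ⟨h1, _, h3⟩
    exact hFt (R.σ d) (by rw [R.fst_fixed]; exact h1) h3
  -- every internal vertex has a switch
  have hint : ∀ v : V, v ≠ s → v ≠ t → 1 ≤ c v := by
    intro v hvs hvt
    obtain ⟨⟨din, hdin, hdin2⟩, ⟨dout, hdout, hdout2⟩⟩ := part1 v hvs hvt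
    have h0 : ¬ ori din.symm := (hori din).mp hdin
    have hfst0 : din.symm.toProd.1 = v := by simp [hdin2]
    have hsc : R.σ.SameCycle din.symm dout :=
      R.orbit_eq _ _ (by rw [hfst0, hdout2])
    obtain ⟨i, _, hie⟩ := hsc.exists_pow_eq'
    obtain ⟨k, hk1, hk2⟩ := exists_transition_up R.σ ori din.symm
      ⟨0, by simpa using h0⟩ ⟨i, by rw [hie]; exact hdout⟩
    rw [hcdef]
    refine Finset.card_pos.mpr ⟨(R.σ ^ k) din.symm, ?_⟩
    simp only [Finset.mem_filter, Finset.mem_univ, true_and]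
    refine ⟨by rw [hσ_pow_fst, hfst0], hk1, ?_⟩
    rw [← Equiv.Perm.mul_apply, ← pow_succ']
    exact hk2
  -- s ≠ t
  have hst : s ≠ t := by
    intro hsteq
    have hnod : ∀ d : G.Dart, d.toProd.1 ≠ s := by
      intro d hd
      have h1 := hFs d hd
      rw [hsteq] at hd
      exact hFt d hd h1
    have hlt : 1 < (Finset.univ.erase s).card := by
      rw [Finset.card_erase_of_mem (Finset.mem_univ s)]
      have : Finset.univ.card = n := rfl
      omega
    obtain ⟨u, hu, w, hw, huw⟩ := Finset.one_lt_card.mp hlt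
    rw [Finset.mem_erase] at hu hw
    have hsw : s ∈ {x : V | x ≠ w} := hw.1.symm
    have huw' : u ∈ {x : V | x ≠ w} := huw
    have hreach := (h2conn w).preconnected ⟨s, hsw⟩ ⟨u, huw'⟩
    obtain ⟨p⟩ := hreach
    have hadj : ∃ z : {x : V | x ≠ w}, (G.induce {x : V | x ≠ w}).Adj ⟨s, hsw⟩ z := by
      have hne : (⟨s, hsw⟩ : {x : V | x ≠ w}) ≠ ⟨u, huw'⟩ := by
        intro h
        exact hu.1 (congrArg Subtype.val h).symm
      cases p with
      | nil => exact absurd rfl hne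
      | cons h q => exact ⟨_, h⟩
    obtain ⟨z, hz⟩ := hadj
    have hGadj : G.Adj s z.1 := by
      simpa using hz
    exact hnod (Dart.mk (s, z.1) hGadj) rfl
  -- put everything together
  have key : ∀ v : V, c v ≤ 1 := by
    by_contra hcon
    push_neg at hcon
    obtain ⟨v0, hv0⟩ := hcon
    have hv0s : v0 ≠ s := by intro h; rw [h, hcs] at hv0; omega
    have hv0t : v0 ≠ t := by intro h; rw [h, hct] at hv0; omega
    have hsum1 : ∑ v : V, c v = c v0 + ∑ v ∈ Finset.univ.erase v0, c v :=
      (Finset.add_sum_erase _ _ (Finset.mem_univ v0)).symm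
    have hsubst : ({s, t} : Finset V) ⊆ Finset.univ.erase v0 := by
      intro x hx
      rw [Finset.mem_insert, Finset.mem_singleton] at hx
      rw [Finset.mem_erase]
      rcases hx with h | h
      · exact ⟨h ▸ (Ne.symm hv0s), Finset.mem_univ _⟩
      · exact ⟨h ▸ (Ne.symm hv0t), Finset.mem_univ _⟩
    have hcard3 : ((Finset.univ.erase v0) \ {s, t}).card = n - 3 := by
      rw [Finset.card_sdiff_of_subset hsubst, Finset.card_erase_of_mem (Finset.mem_univ _)]
      rw [Finset.card_insert_of_notMem (by simp [hst]), Finset.card_singleton]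
      have : Finset.univ.card = n := rfl
      omega
    have hsum2 : ((Finset.univ.erase v0) \ {s, t}).card ≤ ∑ v ∈ Finset.univ.erase v0, c v := by
      refine le_trans ?_ (Finset.sum_le_sum_of_subset (f := c)
        (Finset.sdiff_subset (s := Finset.univ.erase v0) (t := ({s, t} : Finset V))))
      have := Finset.card_nsmul_le_sum ((Finset.univ.erase v0) \ {s, t}) c 1
        (by
          intro x hx
          rw [Finset.mem_sdiff, Finset.mem_insert, Finset.mem_singleton] at hx
          push_neg at hx
          exact hint x hx.2.1 hx.2.2)
      simpa using this
    have hAn : (A.card : ℤ) = ∑ v : V, c v := by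
      rw [← hA'A, hfiber]
    rw [hcard3] at hsum2
    omega
  intro v
  have hset : {d : G.Dart | d.toProd.1 = v ∧ ¬ ori d ∧ ori (R.σ d)} =
      ↑(Finset.univ.filter (fun d : G.Dart => d.toProd.1 = v ∧ ¬ ori d ∧ ori (R.σ d))) := by
    ext d; simp
  rw [hset, Set.ncard_coe_finset]
  exact key v
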